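/- Let X be a normed linear space, (u_k)_{k≥0} a sequence in X, and let p > 1 and q satisfy 1/p + 1/q = 1. Then for all integers n ≥ 1 and m ≥ 2, ‖σ_{n,m} − S_n‖ ≤ (m−1)^{1/q} (∑_{j=n+1}^{n+m−1} ‖u_j‖^p)^{1/p}. -/

import Mathlib

open Finset

/-- For a sequence `(u_k)` in a normed linear space, with `p > 1`, `1/p + 1/q = 1`,
and integers `n ≥ 1`, `m ≥ 2`, the delayed Cesàro mean `σ_{n,m}` satisfies
`‖σ_{n,m} - S_n‖ ≤ (m-1)^{1/q} (∑_{j=n+1}^{n+m-1} ‖u_j‖^p)^{1/p}`. -/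
theorem delayed_cesaro_mean_norm_bound
    {X : Type*} [NormedAddCommGroup X] [NormedSpace ℝ X]
    (u : ℕ → X) (p q : ℝ) (hp : 1 < p) (hpq : 1 / p + 1 / q = 1)
    (n m : ℕ) (hn : 1 ≤ n) (hm : 2 ≤ m) :
    ‖(m : ℝ)⁻¹ • (∑ i ∈ range m, ∑ k ∈ range (n + i + 1), u k)
        - ∑ k ∈ range (n + 1), u k‖
      ≤ ((m : ℝ) - 1) ^ (1 / q) *
          (∑ j ∈ Finset.Icc (n + 1) (n + m - 1), ‖u j‖ ^ p) ^ (1 / p) := by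
  have hm0 : (0:ℝ) < m := by positivity
  set B : ℝ := ∑ j ∈ Finset.Icc (n + 1) (n + m - 1), ‖u j‖
  -- Step 1: LHS ≤ B
  have key : ‖(m : ℝ)⁻¹ • (∑ i ∈ range m, ∑ k ∈ range (n + i + 1), u k)
        - ∑ k ∈ range (n + 1), u k‖ ≤ B := by
    have hrw : (m : ℝ)⁻¹ • (∑ i ∈ range m, ∑ k ∈ range (n + i + 1), u k)
        - ∑ k ∈ range (n + 1), u k
        = (m : ℝ)⁻¹ • ∑ i ∈ range m,
            ((∑ k ∈ range (n + i + 1), u k) - ∑ k ∈ range (n + 1), u k) := by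
      rw [Finset.sum_sub_distrib, smul_sub, Finset.sum_const, card_range, ← Nat.cast_smul_eq_nsmul ℝ,
        smul_smul, inv_mul_cancel₀ hm0.ne', one_smul]
    rw [hrw]
    have hbound : ∀ i ∈ range m,
        ‖(∑ k ∈ range (n + i + 1), u k) - ∑ k ∈ range (n + 1), u k‖ ≤ B := by
      intro i hi
      have hi' : i < m := mem_range.mp hi
      have hsub : range (n + 1) ⊆ range (n + i + 1) := by
        apply range_subset_range.mpr; omega
      rw [← Finset.sum_sdiff_eq_sub hsub]
      refine le_trans (norm_sum_le _ _) ?_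
      apply Finset.sum_le_sum_of_subset_of_nonneg
      · intro j hj
        simp only [mem_sdiff, mem_range, mem_Icc] at hj ⊢
        omega
      · intro j _ _; positivity
    calc ‖(m : ℝ)⁻¹ • ∑ i ∈ range m,
            ((∑ k ∈ range (n + i + 1), u k) - ∑ k ∈ range (n + 1), u k)‖
        = (m:ℝ)⁻¹ * ‖∑ i ∈ range m,
            ((∑ k ∈ range (n + i + 1), u k) - ∑ k ∈ range (n + 1), u k)‖ := by
          rw [norm_smul, Real.norm_eq_abs, abs_of_pos (by positivity)]
      _ ≤ (m:ℝ)⁻¹ * ∑ i ∈ range m, ‖(∑ k ∈ range (n + i + 1), u k)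
            - ∑ k ∈ range (n + 1), u k‖ := by
          gcongr; exact norm_sum_le _ _
      _ ≤ (m:ℝ)⁻¹ * ∑ _i ∈ range m, B := by gcongr with i hi; exact hbound i hi
      _ = B := by
          rw [Finset.sum_const, card_range, nsmul_eq_mul, ← mul_assoc,
            inv_mul_cancel₀ hm0.ne', one_mul]
  refine key.trans ?_
  -- Step 2: Hölder
  have hpq' : p.HolderConjugate q := Real.holderConjugate_iff.mpr ⟨hp, by rw [← one_div, ← one_div]; exact hpq⟩
  have hcard : (Finset.Icc (n + 1) (n + m - 1)).card = m - 1 := by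
    rw [Nat.card_Icc]; omega
  have := Real.inner_le_Lp_mul_Lq_of_nonneg (s := Finset.Icc (n + 1) (n + m - 1))
    (f := fun j => ‖u j‖) (g := fun _ => 1) hpq'
    (fun i _ => norm_nonneg _) (fun i _ => zero_le_one)
  simp only [mul_one, Real.one_rpow, one_pow] at this
  calc B ≤ (∑ j ∈ Finset.Icc (n + 1) (n + m - 1), ‖u j‖ ^ p) ^ (1 / p)
          * (∑ _j ∈ Finset.Icc (n + 1) (n + m - 1), (1:ℝ)) ^ (1 / q) := this
    _ = ((m:ℝ) - 1) ^ (1 / q) *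
          (∑ j ∈ Finset.Icc (n + 1) (n + m - 1), ‖u j‖ ^ p) ^ (1 / p) := by
        rw [Finset.sum_const, hcard, nsmul_eq_mul, mul_one, mul_comm]
        congr 2
        push_cast [Nat.cast_sub (by omega : 1 ≤ m)]
        ring
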